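/- arXiv:2507.02807 — 3 statements merged into one kernel-verified Lean document; each statement's English description precedes it below -/
import Mathlib

section
/- Let 0 < Ã ≤ B̃ < 1, ν ≥ 0, and let n ≥ 1 be a natural number. Let h, h' : Fin n → ℝ satisfy Ã ≤ h t ≤ B̃, Ã ≤ h' t ≤ B̃ and |h t − h' t| ≤ ν for every t. Then | log(1 − ∏_{t} (1 − h t)) − log(1 − ∏_{t} (1 − h' t)) | ≤ n·ν / (1 − (1 − Ã)^n). -/
/-- Product difference bound: values in `[0,1]` differing by at most `ν`. -/
lemma prod_diff_le_card_mul (n : ℕ) (ν : ℝ) (hν : 0 ≤ ν) (f g : Fin n → ℝ)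
    (hf : ∀ t, 0 ≤ f t ∧ f t ≤ 1) (hg : ∀ t, 0 ≤ g t ∧ g t ≤ 1)
    (hd : ∀ t, |f t - g t| ≤ ν) :
    |∏ t, f t - ∏ t, g t| ≤ n * ν := by
  induction n with
  | zero => simp
  | succ m ih =>
    rw [Fin.prod_univ_succ, Fin.prod_univ_succ]
    have hP : 0 ≤ ∏ t, f (Fin.succ t) := Finset.prod_nonneg fun t _ => (hf _).1
    have hP1 : ∏ t, f (Fin.succ t) ≤ 1 :=
      Finset.prod_le_one (fun t _ => (hf _).1) (fun t _ => (hf _).2)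
    have hQ : 0 ≤ ∏ t, g (Fin.succ t) := Finset.prod_nonneg fun t _ => (hg _).1
    have hQ1 : ∏ t, g (Fin.succ t) ≤ 1 :=
      Finset.prod_le_one (fun t _ => (hg _).1) (fun t _ => (hg _).2)
    have hrec : |∏ t, f (Fin.succ t) - ∏ t, g (Fin.succ t)| ≤ m * ν :=
      ih (fun t => f (Fin.succ t)) (fun t => g (Fin.succ t))
        (fun t => hf _) (fun t => hg _) (fun t => hd _)
    have key : f 0 * ∏ t, f (Fin.succ t) - g 0 * ∏ t, g (Fin.succ t)
        = (f 0 - g 0) * ∏ t, f (Fin.succ t)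
          + g 0 * (∏ t, f (Fin.succ t) - ∏ t, g (Fin.succ t)) := by ring
    rw [key]
    have t1 : |(f 0 - g 0) * ∏ t, f (Fin.succ t)| ≤ ν * 1 := by
      rw [abs_mul]
      exact mul_le_mul (hd 0) (by rw [abs_of_nonneg hP]; exact hP1) (abs_nonneg _) hν
    have t2 : |g 0 * (∏ t, f (Fin.succ t) - ∏ t, g (Fin.succ t))| ≤ 1 * (m * ν) := by
      rw [abs_mul]
      exact mul_le_mul (abs_le.mpr ⟨by linarith [(hg 0).1], (hg 0).2⟩) hrec (abs_nonneg _)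
        zero_le_one
    calc |(f 0 - g 0) * ∏ t, f (Fin.succ t)
          + g 0 * (∏ t, f (Fin.succ t) - ∏ t, g (Fin.succ t))|
        ≤ |(f 0 - g 0) * ∏ t, f (Fin.succ t)|
          + |g 0 * (∏ t, f (Fin.succ t) - ∏ t, g (Fin.succ t))| := abs_add_le _ _
      _ ≤ ν * 1 + 1 * (m * ν) := add_le_add t1 t2
      _ = (m + 1 : ℕ) * ν := by push_cast; ring

/-- Lipschitz bound for `log` on `[c, ∞)`. -/
lemma abs_log_sub_log_le (c x y : ℝ) (hc : 0 < c) (hx : c ≤ x) (hy : c ≤ y) :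
    |Real.log x - Real.log y| ≤ |x - y| / c := by
  have hxp : 0 < x := lt_of_lt_of_le hc hx
  have hyp : 0 < y := lt_of_lt_of_le hc hy
  have key : ∀ a b : ℝ, 0 < a → c ≤ b → b ≤ a →
      Real.log a - Real.log b ≤ (a - b) / c := by
    intro a b ha hb hba
    have hbp : 0 < b := lt_of_lt_of_le hc hb
    have h1 : Real.log a - Real.log b = Real.log (a / b) := (Real.log_div ha.ne' hbp.ne').symm
    have h2 : Real.log (a / b) ≤ a / b - 1 := Real.log_le_sub_one_of_pos (div_pos ha hbp)
    have h3 : a / b - 1 = (a - b) / b := by field_simp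
    have h4 : (a - b) / b ≤ (a - b) / c :=
      div_le_div_of_nonneg_left (by linarith) hc hb
    linarith
  rcases le_total y x with hxy | hxy
  · rw [abs_of_nonneg (sub_nonneg.2 ((Real.log_le_log_iff hyp hxp).2 hxy)),
      abs_of_nonneg (by linarith : (0:ℝ) ≤ x - y)]
    exact key x y hxp hy hxy
  · rw [abs_sub_comm, abs_sub_comm x y,
      abs_of_nonneg (sub_nonneg.2 ((Real.log_le_log_iff hxp hyp).2 hxy)),
      abs_of_nonneg (by linarith : (0:ℝ) ≤ y - x)]
    exact key y x hyp hx hxy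

/-- Third-term estimate in the paper's Lemma `Proposition2_X_10`:
for hazard rates in `[A, B] ⊂ (0,1)` differing by at most `ν`,
`|log(1 - ∏ (1 - h t)) - log(1 - ∏ (1 - h' t))| ≤ n ν / (1 - (1 - A)^n)`. -/
theorem log_one_sub_prod_diff_le (A B ν : ℝ)
    (hA : 0 < A) (hAB : A ≤ B) (hB : B < 1) (hν : 0 ≤ ν)
    (n : ℕ) (hn : 1 ≤ n) (h h' : Fin n → ℝ)
    (hh : ∀ t, A ≤ h t ∧ h t ≤ B) (hh' : ∀ t, A ≤ h' t ∧ h' t ≤ B)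
    (hd : ∀ t, |h t - h' t| ≤ ν) :
    |Real.log (1 - ∏ t, (1 - h t)) - Real.log (1 - ∏ t, (1 - h' t))| ≤
      n * ν / (1 - (1 - A) ^ n) := by
  set c := 1 - (1 - A) ^ n with hc_def
  have hA1 : A ≤ 1 := le_of_lt (lt_of_le_of_lt hAB hB)
  have h1A : (1 - A) ^ n < 1 := by
    apply pow_lt_one₀ (by linarith) (by linarith)
    omega
  have hc : 0 < c := by simp [hc_def]; linarith
  have bound : ∀ (f : Fin n → ℝ), (∀ t, A ≤ f t ∧ f t ≤ B) →
      ∏ t, (1 - f t) ≤ (1 - A) ^ n := by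
    intro f hf
    calc ∏ t, (1 - f t) ≤ ∏ _t : Fin n, (1 - A) :=
          Finset.prod_le_prod (fun t _ => by linarith [(hf t).2]) (fun t _ => by linarith [(hf t).1])
      _ = (1 - A) ^ n := by simp
  have hx : c ≤ 1 - ∏ t, (1 - h t) := by have := bound h hh; simp [hc_def]; linarith
  have hy : c ≤ 1 - ∏ t, (1 - h' t) := by have := bound h' hh'; simp [hc_def]; linarith
  have hlog := abs_log_sub_log_le c _ _ hc hx hy
  have hpd : |(1 - ∏ t, (1 - h t)) - (1 - ∏ t, (1 - h' t))| ≤ n * ν := by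
    have := prod_diff_le_card_mul n ν hν (fun t => 1 - h t) (fun t => 1 - h' t)
      (fun t => ⟨by show (0:ℝ) ≤ 1 - h t; linarith [(hh t).2, hB, hAB],
        by show (1:ℝ) - h t ≤ 1; linarith [(hh t).1]⟩)
      (fun t => ⟨by show (0:ℝ) ≤ 1 - h' t; linarith [(hh' t).2, hB, hAB],
        by show (1:ℝ) - h' t ≤ 1; linarith [(hh' t).1]⟩)
      (fun t => by show |(1 - h t) - (1 - h' t)| ≤ ν; simpa [abs_sub_comm] using hd t)
    calc |(1 - ∏ t, (1 - h t)) - (1 - ∏ t, (1 - h' t))|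
        = |∏ t, (1 - h' t) - ∏ t, (1 - h t)| := by ring_nf
      _ = |∏ t, (1 - h t) - ∏ t, (1 - h' t)| := abs_sub_comm _ _
      _ ≤ n * ν := this
  calc |Real.log (1 - ∏ t, (1 - h t)) - Real.log (1 - ∏ t, (1 - h' t))|
      ≤ |(1 - ∏ t, (1 - h t)) - (1 - ∏ t, (1 - h' t))| / c := hlog
    _ ≤ n * ν / c := by gcongr
end

section
/- Let τ ≥ 2 be a natural number, let 0 < Ã ≤ B̃ < 1, let ν ≥ 0, let t₀ ∈ {1,…,τ}, and let δ ∈ {0,1}. Let h, h' : {1,…,τ} → ℝ satisfy Ã ≤ h t ≤ B̃, Ã ≤ h' t ≤ B̃ and |h t − h' t| ≤ ν for every t. Define the discrete-time DRSA loss L(h) := −δ·( log(h t₀) + Σ_{t=1}^{t₀−1} log(1 − h t) ) − δ·log( 1 − ∏_{t=1}^{τ−1} (1 − h t) ) − (1 − δ)·Σ_{t=1}^{t₀−1} log(1 − h t). Then L(h') − L(h) ≤ ν/Ã + 2·τ·ν/(1 − B̃) + (τ − 1)·ν/(1 − (1 − Ã)^{τ−1}). -/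
/-- Lipschitz-type bound for `log` on `[m, ∞)`. -/
lemma log_sub_log_le_abs_div {m a b : ℝ} (hm : 0 < m) (ha : m ≤ a) (hb : m ≤ b) :
    Real.log a - Real.log b ≤ |a - b| / m := by
  have hb0 : 0 < b := lt_of_lt_of_le hm hb
  have ha0 : 0 < a := lt_of_lt_of_le hm ha
  rw [← Real.log_div ha0.ne' hb0.ne']
  have h2 : Real.log (a / b) ≤ a / b - 1 := Real.log_le_sub_one_of_pos (by positivity)
  have h3 : a / b - 1 = (a - b) / b := by field_simp
  have h4 : (a - b) / b ≤ |a - b| / m :=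
    div_le_div₀ (abs_nonneg _) (le_abs_self _) hm hb
  linarith

/-- Product perturbation bound: factors in `[0,1]` differing by at most `ν`. -/
lemma drsa_abs_prod_sub_prod_le (f g : ℕ → ℝ) (ν : ℝ) (hν : 0 ≤ ν) :
    ∀ s : Finset ℕ, (∀ t ∈ s, 0 ≤ f t ∧ f t ≤ 1) → (∀ t ∈ s, 0 ≤ g t ∧ g t ≤ 1)
    → (∀ t ∈ s, |f t - g t| ≤ ν) →
    |∏ t ∈ s, f t - ∏ t ∈ s, g t| ≤ s.card * ν := by
  intro s
  induction s using Finset.induction_on with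
  | empty => simp
  | @insert a s' hx ih =>
    intro hf hg hd
    simp only [Finset.prod_insert hx, Finset.card_insert_of_notMem hx]
    have hf' := fun t ht => hf t (Finset.mem_insert_of_mem ht)
    have hg' := fun t ht => hg t (Finset.mem_insert_of_mem ht)
    have hd' := fun t ht => hd t (Finset.mem_insert_of_mem ht)
    have IH := ih hf' hg' hd'
    have hfa := hf a (Finset.mem_insert_self a s')
    have hga := hg a (Finset.mem_insert_self a s')
    have hda := hd a (Finset.mem_insert_self a s')
    have hPf : 0 ≤ ∏ t ∈ s', f t := Finset.prod_nonneg fun t ht => (hf' t ht).1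
    have hPf1 : ∏ t ∈ s', f t ≤ 1 :=
      Finset.prod_le_one (fun t ht => (hf' t ht).1) (fun t ht => (hf' t ht).2)
    have key : f a * ∏ t ∈ s', f t - g a * ∏ t ∈ s', g t
        = (f a - g a) * ∏ t ∈ s', f t + g a * (∏ t ∈ s', f t - ∏ t ∈ s', g t) := by ring
    rw [key]
    calc |(f a - g a) * ∏ t ∈ s', f t + g a * (∏ t ∈ s', f t - ∏ t ∈ s', g t)|
        ≤ |(f a - g a) * ∏ t ∈ s', f t| + |g a * (∏ t ∈ s', f t - ∏ t ∈ s', g t)| :=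
          abs_add_le _ _
      _ ≤ ν * 1 + 1 * (s'.card * ν) := by
          gcongr
          · rw [abs_mul]
            exact mul_le_mul hda (by rwa [abs_of_nonneg hPf]) (abs_nonneg _) hν
          · rw [abs_mul]
            refine mul_le_mul ?_ IH (abs_nonneg _) zero_le_one
            rw [abs_of_nonneg hga.1]; exact hga.2
      _ = (↑(s'.card + 1)) * ν := by push_cast; ring

/-- Pointwise form of the paper's Lemma `Proposition2_X_10`: the DRSA loss changes by at
most `ν/A + 2τν/(1 - B) + (τ - 1)ν/(1 - (1 - A)^(τ-1))` when every hazard rate in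
`[A, B] ⊂ (0,1)` is perturbed by at most `ν`. -/
theorem drsa_loss_diff_le (τ : ℕ) (hτ : 2 ≤ τ) (A B ν : ℝ)
    (hA : 0 < A) (hAB : A ≤ B) (hB : B < 1) (hν : 0 ≤ ν)
    (t₀ : ℕ) (ht₀ : t₀ ∈ Finset.Icc 1 τ) (δ : ℝ) (hδ : δ = 0 ∨ δ = 1)
    (h h' : ℕ → ℝ)
    (hh : ∀ t ∈ Finset.Icc 1 τ, A ≤ h t ∧ h t ≤ B)
    (hh' : ∀ t ∈ Finset.Icc 1 τ, A ≤ h' t ∧ h' t ≤ B)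
    (hd : ∀ t ∈ Finset.Icc 1 τ, |h t - h' t| ≤ ν)
    (L : (ℕ → ℝ) → ℝ)
    (hL : ∀ g : ℕ → ℝ, L g =
      -δ * (Real.log (g t₀) + ∑ t ∈ Finset.Ico 1 t₀, Real.log (1 - g t))
      - δ * Real.log (1 - ∏ t ∈ Finset.Ico 1 τ, (1 - g t))
      - (1 - δ) * ∑ t ∈ Finset.Ico 1 t₀, Real.log (1 - g t)) :
    L h' - L h ≤ ν / A + 2 * τ * ν / (1 - B)
      + ((τ : ℝ) - 1) * ν / (1 - (1 - A) ^ (τ - 1)) := by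
  obtain ⟨ht₀1, ht₀τ⟩ := Finset.mem_Icc.mp ht₀
  have hsub : Finset.Ico 1 t₀ ⊆ Finset.Icc 1 τ := fun t ht => by
    rw [Finset.mem_Ico] at ht; exact Finset.mem_Icc.mpr ⟨ht.1, le_trans (Nat.le_of_lt ht.2) ht₀τ⟩
  have hsub2 : Finset.Ico 1 τ ⊆ Finset.Icc 1 τ := fun t ht => by
    rw [Finset.mem_Ico] at ht; exact Finset.mem_Icc.mpr ⟨ht.1, Nat.le_of_lt ht.2⟩
  have hB0 : 0 < 1 - B := by linarith
  have hτR : (2:ℝ) ≤ (τ:ℝ) := by exact_mod_cast hτ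
  have hcard : (Finset.Ico 1 τ).card = τ - 1 := by rw [Nat.card_Ico]
  have hcastτ : ((τ - 1 : ℕ) : ℝ) = (τ:ℝ) - 1 := by
    rw [Nat.cast_sub (by omega)]; norm_num
  have hPbound : ∀ g : ℕ → ℝ, (∀ t ∈ Finset.Icc 1 τ, A ≤ g t ∧ g t ≤ B) →
      0 ≤ ∏ t ∈ Finset.Ico 1 τ, (1 - g t) ∧
      ∏ t ∈ Finset.Ico 1 τ, (1 - g t) ≤ (1 - A) ^ (τ - 1) := by
    intro g hg
    constructor
    · exact Finset.prod_nonneg fun t ht => by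
        have := hg t (hsub2 ht); linarith [this.2]
    · rw [← hcard, ← Finset.prod_const]
      apply Finset.prod_le_prod
      · intro t ht; have := hg t (hsub2 ht); linarith [this.2]
      · intro t ht; have := hg t (hsub2 ht); linarith [this.1]
  have hpowlt : (1 - A) ^ (τ - 1) < 1 := by
    apply pow_lt_one₀ (by linarith) (by linarith)
    omega
  have hm : 0 < 1 - (1 - A) ^ (τ - 1) := by linarith
  have hht₀ := hh t₀ ht₀
  have hht₀' := hh' t₀ ht₀
  -- T1 : log term
  have T1 : Real.log (h t₀) - Real.log (h' t₀) ≤ ν / A := by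
    calc Real.log (h t₀) - Real.log (h' t₀) ≤ |h t₀ - h' t₀| / A :=
          log_sub_log_le_abs_div hA hht₀.1 hht₀'.1
      _ ≤ ν / A := by gcongr; exact hd t₀ ht₀
  -- T2 : sum term
  have T2 : (∑ t ∈ Finset.Ico 1 t₀, Real.log (1 - h t))
      - (∑ t ∈ Finset.Ico 1 t₀, Real.log (1 - h' t)) ≤ 2 * τ * ν / (1 - B) := by
    rw [← Finset.sum_sub_distrib]
    calc (∑ t ∈ Finset.Ico 1 t₀, (Real.log (1 - h t) - Real.log (1 - h' t)))
        ≤ ∑ t ∈ Finset.Ico 1 t₀, ν / (1 - B) := by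
          apply Finset.sum_le_sum
          intro t ht
          have h1 := hh t (hsub ht); have h2 := hh' t (hsub ht)
          calc Real.log (1 - h t) - Real.log (1 - h' t)
              ≤ |(1 - h t) - (1 - h' t)| / (1 - B) :=
                log_sub_log_le_abs_div hB0 (by linarith [h1.2]) (by linarith [h2.2])
            _ ≤ ν / (1 - B) := by
                gcongr
                have he : (1 - h t) - (1 - h' t) = -(h t - h' t) := by ring
                rw [he, abs_neg]; exact hd t (hsub ht)
      _ = (Finset.Ico 1 t₀).card * (ν / (1 - B)) := by rw [Finset.sum_const, nsmul_eq_mul]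
      _ ≤ (2 * τ) * (ν / (1 - B)) := by
          apply mul_le_mul_of_nonneg_right _ (by positivity)
          rw [Nat.card_Ico, Nat.cast_sub ht₀1]
          have : (t₀ : ℝ) ≤ τ := by exact_mod_cast ht₀τ
          push_cast
          linarith
      _ = 2 * τ * ν / (1 - B) := by ring
  -- T3 : product term
  have hPh := hPbound h hh
  have hPh' := hPbound h' hh'
  have hdiff : |(∏ t ∈ Finset.Ico 1 τ, (1 - h t)) - ∏ t ∈ Finset.Ico 1 τ, (1 - h' t)|
      ≤ ((τ:ℝ) - 1) * ν := by
    have key := drsa_abs_prod_sub_prod_le (fun t => 1 - h t) (fun t => 1 - h' t) ν hν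
      (Finset.Ico 1 τ)
      (fun t ht => by have := hh t (hsub2 ht); constructor <;> linarith [this.1, this.2])
      (fun t ht => by have := hh' t (hsub2 ht); constructor <;> linarith [this.1, this.2])
      (fun t ht => by
        have he : (1 - h t) - (1 - h' t) = -(h t - h' t) := by ring
        rw [he, abs_neg]; exact hd t (hsub2 ht))
    rw [hcard, hcastτ] at key
    exact key
  have T3 : Real.log (1 - ∏ t ∈ Finset.Ico 1 τ, (1 - h t))
      - Real.log (1 - ∏ t ∈ Finset.Ico 1 τ, (1 - h' t))
      ≤ ((τ:ℝ) - 1) * ν / (1 - (1 - A) ^ (τ - 1)) := by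
    calc Real.log (1 - ∏ t ∈ Finset.Ico 1 τ, (1 - h t))
          - Real.log (1 - ∏ t ∈ Finset.Ico 1 τ, (1 - h' t))
        ≤ |(1 - ∏ t ∈ Finset.Ico 1 τ, (1 - h t)) - (1 - ∏ t ∈ Finset.Ico 1 τ, (1 - h' t))|
            / (1 - (1 - A) ^ (τ - 1)) :=
          log_sub_log_le_abs_div hm (by linarith [hPh.2]) (by linarith [hPh'.2])
      _ ≤ ((τ:ℝ) - 1) * ν / (1 - (1 - A) ^ (τ - 1)) := by
          gcongr
          have he : (1 - ∏ t ∈ Finset.Ico 1 τ, (1 - h t))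
              - (1 - ∏ t ∈ Finset.Ico 1 τ, (1 - h' t))
              = -((∏ t ∈ Finset.Ico 1 τ, (1 - h t)) - ∏ t ∈ Finset.Ico 1 τ, (1 - h' t)) := by
            ring
          rw [he, abs_neg]; exact hdiff
  -- combine
  have hT3nn : 0 ≤ ((τ:ℝ) - 1) * ν / (1 - (1 - A) ^ (τ - 1)) :=
    div_nonneg (mul_nonneg (by linarith) hν) hm.le
  have hT1nn : 0 ≤ ν / A := by positivity
  rw [hL h, hL h']
  rcases hδ with h0 | h1
  · rw [h0]
    linarith [T2, hT1nn, hT3nn]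
  · rw [h1]
    linarith [T1, T2, T3]
end

section
/- Let Θ be a nonempty type, m ≥ 1, L, L̂ : Θ → (Fin m → ℝ) → ℝ, and let ζ ≥ 0. Let μ*, μ̂* : Fin m → ℝ be nonnegative vectors and θ_A, θ̂†, θ†, θ_B ∈ Θ satisfy: (i) L(θ_A, μ*) ≤ L(θ, μ*) for all θ; (ii) L̂(θ̂†, μ*) ≤ L̂(θ, μ*) for all θ; (iii) L(θ†, μ̂*) ≤ L(θ, μ̂*) for all θ; (iv) L̂(θ_B, μ̂*) ≤ L̂(θ, μ̂*) for all θ; (v) L(θ_A, μ*) ≥ L(θ†, μ̂*) and L̂(θ_B, μ̂*) ≥ L̂(θ̂†, μ*); and (vi) |L(θ, μ*) − L̂(θ, μ*)| ≤ (1 + Σ_i μ* i)·ζ and |L(θ, μ̂*) − L̂(θ, μ̂*)| ≤ (1 + Σ_i μ̂* i)·ζ for every θ. Set D := L(θ_A, μ*), D̂ := L̂(θ_B, μ̂*), and κ := max(Σ_i μ* i, Σ_i μ̂* i). Then |D − D̂| ≤ (1 + κ)·ζ. -/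
/-- Conclusion `|D*_θ − D̂*_θ| ≤ (1 + κ)ζ` of the paper's Proposition 3 in deterministic
form. -/
theorem dual_gap_le_kappa_zeta {Θ : Type*} [Nonempty Θ] (m : ℕ) (hm : 1 ≤ m)
    (L Lhat : Θ → (Fin m → ℝ) → ℝ) (ζ : ℝ) (hζ : 0 ≤ ζ)
    (μstar μhat : Fin m → ℝ) (hμstar : ∀ i, 0 ≤ μstar i) (hμhat : ∀ i, 0 ≤ μhat i)
    (θA θhatdag θdag θB : Θ)
    (h1 : ∀ θ, L θA μstar ≤ L θ μstar)
    (h2 : ∀ θ, Lhat θhatdag μstar ≤ Lhat θ μstar)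
    (h3 : ∀ θ, L θdag μhat ≤ L θ μhat)
    (h4 : ∀ θ, Lhat θB μhat ≤ Lhat θ μhat)
    (h5 : L θdag μhat ≤ L θA μstar)
    (h6 : Lhat θhatdag μstar ≤ Lhat θB μhat)
    (h7 : ∀ θ, |L θ μstar - Lhat θ μstar| ≤ (1 + ∑ i, μstar i) * ζ)
    (h8 : ∀ θ, |L θ μhat - Lhat θ μhat| ≤ (1 + ∑ i, μhat i) * ζ) :
    |L θA μstar - Lhat θB μhat| ≤ (1 + max (∑ i, μstar i) (∑ i, μhat i)) * ζ := by
  have ha := abs_le.mp (h7 θhatdag)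
  have hb := abs_le.mp (h8 θdag)
  have hs : (∑ i, μstar i) ≤ max (∑ i, μstar i) (∑ i, μhat i) := le_max_left _ _
  have hh : (∑ i, μhat i) ≤ max (∑ i, μstar i) (∑ i, μhat i) := le_max_right _ _
  have hA := h1 θhatdag
  have hB := h4 θdag
  rw [abs_le]
  constructor <;> nlinarith [ha.1, ha.2, hb.1, hb.2]
end
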